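/- Let 0 < β_L < β_R and λ ∈ ℝ. Define J_λ := (1/2)·(1/2π)·∫_{-π}^{π} j(cos k)·Δ_λ(cos k) dk, with j(e) = e√(1-e²)(ρ_{β_L}(e)-ρ_{β_R}(e)), Δ_λ(e) = (1-e²)/(1-e²+λ²) for λ≠0 and Δ_0 = 1. Then J_λ > 0. -/

import Mathlib

open Real intervalIntegral

noncomputable def planckDensity (r e : ℝ) : ℝ := 1 / (1 + Real.exp (r * e))

noncomputable def fluxDensity (βL βR e : ℝ) : ℝ :=
  e * Real.sqrt (1 - e ^ 2) * (planckDensity βL e - planckDensity βR e)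

noncomputable def magneticCorrection (lam e : ℝ) : ℝ :=
  if lam = 0 then 1 else (1 - e ^ 2) / (1 - e ^ 2 + lam ^ 2)

noncomputable def heatFlux (βL βR lam : ℝ) : ℝ :=
  (1 / (4 * Real.pi)) *
    ∫ k in (-Real.pi)..Real.pi, fluxDensity βL βR (Real.cos k) * magneticCorrection lam (Real.cos k)

lemma planck_lt (r s e : ℝ) (h : r * e < s * e) :
    planckDensity s e < planckDensity r e := by
  unfold planckDensity
  apply one_div_lt_one_div_of_lt
  · positivity
  · exact add_lt_add_right (Real.exp_lt_exp.2 h) 1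

lemma flux_nonneg (βL βR : ℝ) (hLR : βL < βR) (e : ℝ) :
    0 ≤ fluxDensity βL βR e := by
  unfold fluxDensity
  rw [mul_assoc, mul_comm (Real.sqrt _), ← mul_assoc]
  apply mul_nonneg _ (Real.sqrt_nonneg _)
  rcases lt_trichotomy e 0 with he | he | he
  · have : planckDensity βL e < planckDensity βR e :=
      planck_lt βR βL e (by nlinarith)
    nlinarith
  · simp [he]
  · have : planckDensity βR e < planckDensity βL e :=
      planck_lt βL βR e (by nlinarith)
    nlinarith

lemma flux_pos (βL βR : ℝ) (hLR : βL < βR) (e : ℝ) (h0 : 0 < e) (h1 : e < 1) :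
    0 < fluxDensity βL βR e := by
  unfold fluxDensity
  have hs : 0 < Real.sqrt (1 - e ^ 2) := Real.sqrt_pos.2 (by nlinarith)
  have hd : planckDensity βR e < planckDensity βL e :=
    planck_lt βL βR e (by nlinarith)
  have : 0 < planckDensity βL e - planckDensity βR e := by linarith
  positivity

lemma mag_nonneg (lam e : ℝ) (he : e ^ 2 ≤ 1) : 0 ≤ magneticCorrection lam e := by
  unfold magneticCorrection
  split_ifs with h
  · norm_num
  · have hl : 0 < lam ^ 2 := by positivity
    apply div_nonneg <;> nlinarith

lemma mag_pos (lam e : ℝ) (he : e ^ 2 < 1) : 0 < magneticCorrection lam e := by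
  unfold magneticCorrection
  split_ifs with h
  · norm_num
  · have hl : 0 < lam ^ 2 := by positivity
    apply div_pos <;> nlinarith

lemma integrand_cont (βL βR lam : ℝ) :
    Continuous (fun k => fluxDensity βL βR (Real.cos k) * magneticCorrection lam (Real.cos k)) := by
  have hc : Continuous fun k : ℝ => Real.cos k := Real.continuous_cos
  have hp : ∀ r : ℝ, Continuous fun k : ℝ => planckDensity r (Real.cos k) := by
    intro r
    unfold planckDensity
    apply Continuous.div continuous_const (by fun_prop)
    intro x
    positivity
  have hf : Continuous fun k => fluxDensity βL βR (Real.cos k) := by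
    unfold fluxDensity
    exact ((hc.mul ((continuous_const.sub (hc.pow 2)).sqrt)).mul ((hp βL).sub (hp βR)))
  apply hf.mul
  rcases eq_or_ne lam 0 with h | h
  · have : (fun k => magneticCorrection lam (Real.cos k)) = fun _ : ℝ => (1 : ℝ) := by
      funext k; simp [magneticCorrection, h]
    rw [this]; exact continuous_const
  · have : (fun k => magneticCorrection lam (Real.cos k)) =
        fun k => (1 - Real.cos k ^ 2) / (1 - Real.cos k ^ 2 + lam ^ 2) := by
      funext k; simp [magneticCorrection, h]
    rw [this]
    apply Continuous.div (by fun_prop) (by fun_prop)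
    intro x
    have h1 := Real.cos_sq_le_one x
    have h2 : 0 < lam ^ 2 := by positivity
    nlinarith

theorem heatFlux_pos (βL βR : ℝ) (hL : 0 < βL) (hLR : βL < βR) (lam : ℝ) :
    0 < heatFlux βL βR lam := by
  set f : ℝ → ℝ := fun k => fluxDensity βL βR (Real.cos k) * magneticCorrection lam (Real.cos k)
    with hfdef
  have hcont : Continuous f := integrand_cont βL βR lam
  have hnn : ∀ k : ℝ, 0 ≤ f k := fun k =>
    mul_nonneg (flux_nonneg βL βR hLR _) (mag_nonneg lam _ (Real.cos_sq_le_one k))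
  have hpi : (0 : ℝ) < Real.pi := Real.pi_pos
  have hint : ∀ a b : ℝ, IntervalIntegrable f MeasureTheory.volume a b := fun a b =>
    hcont.intervalIntegrable a b
  have hsplit1 : ∫ k in (-Real.pi)..(Real.pi/2), f k = (∫ k in (-Real.pi)..(Real.pi/4), f k)
      + ∫ k in (Real.pi/4)..(Real.pi/2), f k :=
    (intervalIntegral.integral_add_adjacent_intervals (hint _ _) (hint _ _)).symm
  have hsplit2 : ∫ k in (-Real.pi)..Real.pi, f k = (∫ k in (-Real.pi)..(Real.pi/2), f k)
      + ∫ k in (Real.pi/2)..Real.pi, f k :=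
    (intervalIntegral.integral_add_adjacent_intervals (hint _ _) (hint _ _)).symm
  have hpos : 0 < ∫ k in (Real.pi/4)..(Real.pi/2), f k := by
    apply intervalIntegral.intervalIntegral_pos_of_pos_on (hint _ _)
    · intro x hx
      obtain ⟨hx1, hx2⟩ := hx
      have hc0 : 0 < Real.cos x := by
        apply Real.cos_pos_of_mem_Ioo
        constructor <;> nlinarith
      have hc1 : Real.cos x < 1 := by
        calc Real.cos x ≤ Real.cos (Real.pi/4) := by
              apply Real.cos_le_cos_of_nonneg_of_le_pi (by positivity) (by linarith) (le_of_lt hx1)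
          _ < 1 := by
              rw [Real.cos_pi_div_four]
              nlinarith [Real.sq_sqrt (by norm_num : (2:ℝ) ≥ 0), Real.sqrt_nonneg 2]
      exact mul_pos (flux_pos βL βR hLR _ hc0 hc1) (mag_pos lam _ (by nlinarith))
    · linarith
  have h1 : 0 ≤ ∫ k in (-Real.pi)..(Real.pi/4), f k :=
    intervalIntegral.integral_nonneg (by linarith) (fun u _ => hnn u)
  have h2 : 0 ≤ ∫ k in (Real.pi/2)..Real.pi, f k :=
    intervalIntegral.integral_nonneg (by linarith) (fun u _ => hnn u)
  have : 0 < ∫ k in (-Real.pi)..Real.pi, f k := by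
    rw [hsplit2, hsplit1]; linarith
  unfold heatFlux
  have h4 : 0 < 1 / (4 * Real.pi) := by positivity
  exact mul_pos h4 this
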